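/- If G and H are finite simple connected graphs each with at least two vertices and ι(H) ≥ 2, then ι(G ∘ H) = γ(G ∘ H) = γ_t(G), where ∘ denotes the lexicographic product and γ_t the total domination number. -/

import Mathlib

section Helpers

/-- In a connected graph with at least two vertices, every vertex has a neighbor. -/
lemma exists_adj_of_connected {V : Type*} [Fintype V] {G : SimpleGraph V}
    (hc : G.Connected) (h2 : 2 ≤ Fintype.card V) (v : V) : ∃ u, G.Adj v u := by
  obtain ⟨u, hu⟩ := Fintype.exists_ne_of_one_lt_card (by omega) v
  obtain ⟨w⟩ := hc.preconnected v u
  cases w with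
  | nil => exact absurd rfl hu
  | cons h p => exact ⟨_, h⟩

end Helpers

/-- The closed neighborhood `N[A]` of a set of vertices. -/
def closedNbhd {V : Type*} (G : SimpleGraph V) (A : Set V) : Set V :=
  {v | v ∈ A ∨ ∃ a ∈ A, G.Adj a v}

/-- A set of vertices is independent if it contains no edge. -/
def IndepSet {V : Type*} (G : SimpleGraph V) (S : Set V) : Prop :=
  ∀ u ∈ S, ∀ v ∈ S, ¬ G.Adj u v

/-- `A` is isolating if the vertices outside `N[A]` form an independent set. -/
def IsIsolating {V : Type*} (G : SimpleGraph V) (A : Set V) : Prop :=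
  IndepSet G (closedNbhd G A)ᶜ

/-- The isolation number `ι(G)`. -/
noncomputable def isolationNum {V : Type*} (G : SimpleGraph V) : ℕ :=
  sInf {n | ∃ A : Set V, IsIsolating G A ∧ A.ncard = n}

/-- `D` is a dominating set if `N[D] = V(G)`. -/
def IsDominating {V : Type*} (G : SimpleGraph V) (D : Set V) : Prop :=
  closedNbhd G D = Set.univ

/-- The domination number `γ(G)`. -/
noncomputable def dominationNum {V : Type*} (G : SimpleGraph V) : ℕ :=
  sInf {n | ∃ D : Set V, IsDominating G D ∧ D.ncard = n}
/-- A total dominating set: every vertex has a neighbor in `D`. -/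
def IsTotalDominating {V : Type*} (G : SimpleGraph V) (D : Set V) : Prop :=
  ∀ v : V, ∃ d ∈ D, G.Adj v d

/-- The total domination number `γ_t(G)`. -/
noncomputable def totalDomNum {V : Type*} (G : SimpleGraph V) : ℕ :=
  sInf {n | ∃ D : Set V, IsTotalDominating G D ∧ D.ncard = n}

/-- The lexicographic product `G ∘ H`. -/
def lexProd {α β : Type*} (G : SimpleGraph α) (H : SimpleGraph β) : SimpleGraph (α × β) where
  Adj x y := G.Adj x.1 y.1 ∨ (x.1 = y.1 ∧ H.Adj x.2 y.2)
  symm := by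
    constructor
    rintro ⟨a, b⟩ ⟨c, d⟩ (h | ⟨rfl, h⟩)
    · exact Or.inl h.symm
    · exact Or.inr ⟨rfl, h.symm⟩
  loopless := by
    constructor
    rintro ⟨a, b⟩ (h | ⟨-, h⟩)
    · exact G.irrefl h
    · exact H.irrefl h

/-- If `G` and `H` are nontrivial connected graphs with `ι(H) ≥ 2`, then
`ι(G ∘ H) = γ(G ∘ H) = γ_t(G)`. -/
theorem isolation_lexProd_eq_totalDomination
    {V W : Type*} [Fintype V] [Fintype W] (G : SimpleGraph V) (H : SimpleGraph W)
    (hGc : G.Connected) (hHc : H.Connected)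
    (hGn : 2 ≤ Fintype.card V) (hHn : 2 ≤ Fintype.card W)
    (hiH : 2 ≤ isolationNum H) :
    isolationNum (lexProd G H) = dominationNum (lexProd G H) ∧
      dominationNum (lexProd G H) = totalDomNum G := by
  classical
  set L := lexProd G H with hL
  have hGadj : ∀ v : V, ∃ u, G.Adj v u := exists_adj_of_connected hGc hGn
  have hWne : Nonempty W := Fintype.card_pos_iff.mp (by omega)
  obtain ⟨h₀⟩ := hWne
  -- nonemptiness of the three defining sets
  have hIsoNe : {n | ∃ A : Set (V × W), IsIsolating L A ∧ A.ncard = n}.Nonempty := by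
    refine ⟨(Set.univ : Set (V × W)).ncard, Set.univ, ?_, rfl⟩
    intro u hu
    exact absurd (Or.inl (Set.mem_univ u)) hu
  have hDomNe : {n | ∃ D : Set (V × W), IsDominating L D ∧ D.ncard = n}.Nonempty := by
    refine ⟨(Set.univ : Set (V × W)).ncard, Set.univ, ?_, rfl⟩
    ext x
    simp [closedNbhd]
  have hTotNe : {n | ∃ D : Set V, IsTotalDominating G D ∧ D.ncard = n}.Nonempty := by
    refine ⟨(Set.univ : Set V).ncard, Set.univ, ?_, rfl⟩
    intro v
    obtain ⟨u, hu⟩ := hGadj v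
    exact ⟨u, Set.mem_univ u, hu⟩
  -- ι(L) ≤ γ(L)
  have h1 : isolationNum L ≤ dominationNum L := by
    obtain ⟨D0, hD0, hD0c⟩ := Nat.sInf_mem hDomNe
    refine Nat.sInf_le ⟨D0, ?_, hD0c⟩
    intro u hu
    rw [hD0] at hu
    exact absurd (Set.mem_univ u) hu
  -- γ(L) ≤ γ_t(G)
  have h2 : dominationNum L ≤ totalDomNum G := by
    obtain ⟨D, hD, hDc⟩ := Nat.sInf_mem hTotNe
    refine Nat.sInf_le ⟨(fun g => (g, h₀)) '' D, ?_, ?_⟩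
    · ext ⟨g, h⟩
      simp only [Set.mem_univ, iff_true]
      obtain ⟨d, hdD, hadj⟩ := hD g
      exact Or.inr ⟨(d, h₀), ⟨d, hdD, rfl⟩, Or.inl hadj.symm⟩
    · rw [Set.ncard_image_of_injective D (fun a b hab => (Prod.mk.injEq _ _ _ _).mp hab |>.1)]
      exact hDc
  -- γ_t(G) ≤ ι(L) : the main direction
  have h3 : totalDomNum G ≤ isolationNum L := by
    obtain ⟨A, hAiso, hAcard⟩ := Nat.sInf_mem hIsoNe
    have hAfin : A.Finite := Set.toFinite A
    set Af : Finset (V × W) := hAfin.toFinset with hAf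
    have hmemAf : ∀ x, x ∈ Af ↔ x ∈ A := fun x => hAfin.mem_toFinset
    set P : Finset V := Af.image Prod.fst with hP
    -- "bad" vertices: no neighbor whose column meets A
    set bad : V → Prop := fun g => ∀ g', G.Adj g g' → ∀ h, (g', h) ∉ A with hbad
    -- every bad vertex has a fiber of size ≥ 2
    have hkey : ∀ g, bad g → 2 ≤ (Af.filter (fun x => x.1 = g)).card := by
      intro g hg
      set B : Set W := {h | (g, h) ∈ A} with hB
      have hcol : ∀ h : W, h ∈ (closedNbhd H B)ᶜ → (g, h) ∈ (closedNbhd L A)ᶜ := by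
        intro h hh hmem
        rcases hmem with hin | ⟨⟨a1, a2⟩, haA, hadj⟩
        · exact hh (Or.inl hin)
        · rcases hadj with hGa | ⟨heq, hHa⟩
          · exact hg a1 (hGa.symm) a2 haA
          · have heq' : a1 = g := heq
            subst heq'
            exact hh (Or.inr ⟨a2, haA, hHa⟩)
      have hBiso : IsIsolating H B := by
        intro h₁ hh₁ h₂ hh₂ hadj
        exact hAiso (g, h₁) (hcol h₁ hh₁) (g, h₂) (hcol h₂ hh₂) (Or.inr ⟨rfl, hadj⟩)
      have hBge : 2 ≤ B.ncard := le_trans hiH (Nat.sInf_le ⟨B, hBiso, rfl⟩)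
      have hfib : Af.filter (fun x => x.1 = g) = (Set.toFinite B).toFinset.image (fun h => (g, h)) := by
        ext ⟨x1, x2⟩
        simp only [Finset.mem_filter, hmemAf, Finset.mem_image, Set.Finite.mem_toFinset]
        constructor
        · rintro ⟨hxA, rfl⟩
          exact ⟨x2, hxA, rfl⟩
        · rintro ⟨h, hhB, heq⟩
          obtain ⟨rfl, rfl⟩ := Prod.mk.injEq .. |>.mp heq
          exact ⟨hhB, rfl⟩
      rw [hfib, Finset.card_image_of_injective _ (fun a b hab => (Prod.mk.injEq _ _ _ _).mp hab |>.2)]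
      rwa [Set.ncard_eq_toFinset_card B (Set.toFinite B)] at hBge
    -- bad vertices are in P
    have hbadP : ∀ g, bad g → g ∈ P := by
      intro g hg
      have h2c := hkey g hg
      have : (Af.filter (fun x => x.1 = g)).Nonempty := Finset.card_pos.mp (by omega)
      obtain ⟨x, hx⟩ := this
      rw [Finset.mem_filter] at hx
      exact Finset.mem_image.mpr ⟨x, hx.1, hx.2⟩
    set T : Finset V := P.filter bad with hT
    -- the counting: |A| ≥ |P| + |T|
    have hcount : P.card + T.card ≤ Af.card := by
      have hsum : Af.card = ∑ g ∈ P, (Af.filter (fun x => x.1 = g)).card :=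
        Finset.card_eq_sum_card_image Prod.fst Af
      have hsplit : ∑ g ∈ P, (Af.filter (fun x => x.1 = g)).card
          = ∑ g ∈ T, (Af.filter (fun x => x.1 = g)).card
            + ∑ g ∈ P.filter (fun g => ¬ bad g), (Af.filter (fun x => x.1 = g)).card :=
        (Finset.sum_filter_add_sum_filter_not P bad _).symm
      have hTle : T.card * 2 ≤ ∑ g ∈ T, (Af.filter (fun x => x.1 = g)).card := by
        calc T.card * 2 = ∑ _g ∈ T, 2 := by rw [Finset.sum_const, smul_eq_mul]
        _ ≤ _ := Finset.sum_le_sum (fun g hg => hkey g (Finset.mem_filter.mp hg).2)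
      have hNle : (P.filter (fun g => ¬ bad g)).card
          ≤ ∑ g ∈ P.filter (fun g => ¬ bad g), (Af.filter (fun x => x.1 = g)).card := by
        calc (P.filter (fun g => ¬ bad g)).card = ∑ _g ∈ P.filter (fun g => ¬ bad g), 1 := by
              rw [Finset.sum_const, smul_eq_mul, mul_one]
        _ ≤ _ := by
              refine Finset.sum_le_sum (fun g hg => ?_)
              have hgP := (Finset.mem_filter.mp hg).1
              obtain ⟨x, hxAf, hx1⟩ := Finset.mem_image.mp hgP
              exact Finset.card_pos.mpr ⟨x, Finset.mem_filter.mpr ⟨hxAf, hx1⟩⟩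
      have hPsplit : T.card + (P.filter (fun g => ¬ bad g)).card = P.card :=
        Finset.card_filter_add_card_filter_not (p := bad)
      omega
    -- build the total dominating set
    set f : V → V := fun g => Classical.choose (hGadj g) with hf
    have hfadj : ∀ g, G.Adj g (f g) := fun g => Classical.choose_spec (hGadj g)
    set D' : Set V := (P : Set V) ∪ f '' (T : Set V) with hD'
    have hD'tot : IsTotalDominating G D' := by
      intro v
      by_cases hb : bad v
      · have hvT : v ∈ T := Finset.mem_filter.mpr ⟨hbadP v hb, hb⟩
        exact ⟨f v, Or.inr ⟨v, hvT, rfl⟩, hfadj v⟩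
      · simp only [hbad] at hb
        push_neg at hb
        obtain ⟨g', hadj, h, hA⟩ := hb
        have hg'P : g' ∈ P := Finset.mem_image.mpr ⟨(g', h), (hmemAf _).mpr hA, rfl⟩
        exact ⟨g', Or.inl hg'P, hadj⟩
    have hD'card : D'.ncard ≤ P.card + T.card := by
      calc D'.ncard ≤ (P : Set V).ncard + (f '' (T : Set V)).ncard :=
            Set.ncard_union_le _ _
      _ ≤ P.card + (T : Set V).ncard :=
            add_le_add (le_of_eq (Set.ncard_coe_finset P)) (Set.ncard_image_le (Set.toFinite _))
      _ = P.card + T.card := by rw [Set.ncard_coe_finset]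
    have htle : totalDomNum G ≤ D'.ncard := Nat.sInf_le ⟨D', hD'tot, rfl⟩
    have hAfc : A.ncard = Af.card := Set.ncard_eq_toFinset_card A hAfin
    have hAi : A.ncard = isolationNum L := hAcard
    omega
  exact ⟨le_antisymm h1 (h2.trans h3), le_antisymm h2 (h3.trans h1)⟩
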